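/- Let K = [[P, Q],[Qᵀ, R]] be a symmetric positive semidefinite block matrix. Then for all vectors u, v of appropriate dimensions, (uᵀ, vᵀ) K (u; v) ≥ max( uᵀ(P − Q R⁺ Qᵀ)u, vᵀ(R − Qᵀ P⁺ Q)v ), where M⁺ denotes the Moore–Penrose pseudoinverse. -/

import Mathlib

open Matrix

/-- `Mplus` is the Moore–Penrose pseudoinverse of `M`. -/
def IsMoorePenrose {a b : Type*} [Fintype a] [Fintype b]
    (M : Matrix a b ℝ) (Mplus : Matrix b a ℝ) : Prop :=
  M * Mplus * M = M ∧ Mplus * M * Mplus = Mplus ∧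
    (M * Mplus)ᵀ = M * Mplus ∧ (Mplus * M)ᵀ = Mplus * M

lemma quad_scalar_aux {a s : ℝ} (ha : 0 ≤ a) (h : ∀ t : ℝ, 0 ≤ t*t*a + 2*t*s) : s = 0 := by
  by_contra hs
  have hpos : 0 < a + 1 := by linarith
  have h1 := h (-(s/(a+1)))
  have e : (-(s/(a+1)))*(-(s/(a+1)))*a + 2*(-(s/(a+1)))*s
      = -(s*s*(a+2))/((a+1)*(a+1)) := by field_simp; ring
  rw [e] at h1
  have h2 : 0 < s*s*(a+2) := mul_pos (mul_self_pos.2 hs) (by linarith)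
  have h3 : -(s*s*(a+2))/((a+1)*(a+1)) < 0 :=
    div_neg_of_neg_of_pos (by linarith) (by positivity)
  linarith

lemma schur_aux {n m : Type*} [Fintype n] [Fintype m] [DecidableEq n] [DecidableEq m]
    (P : Matrix n n ℝ) (Q : Matrix n m ℝ) (R : Matrix m m ℝ) (Rplus : Matrix m m ℝ)
    (hK : (Matrix.fromBlocks P Q Qᵀ R).PosSemidef) (hR : IsMoorePenrose R Rplus)
    (u : n → ℝ) (v : m → ℝ) :
    u ⬝ᵥ (P - Q * Rplus * Qᵀ).mulVec u ≤
      (Sum.elim u v) ⬝ᵥ (Matrix.fromBlocks P Q Qᵀ R).mulVec (Sum.elim u v) := by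
  -- submatrices are PSD
  have hPpsd : P.PosSemidef := by
    have h := hK.submatrix Sum.inl
    have he : (Matrix.fromBlocks P Q Qᵀ R).submatrix Sum.inl Sum.inl = P := by
      ext i j; simp [Matrix.fromBlocks]
    rwa [he] at h
  have hRpsd : R.PosSemidef := by
    have h := hK.submatrix Sum.inr
    have he : (Matrix.fromBlocks P Q Qᵀ R).submatrix Sum.inr Sum.inr = R := by
      ext i j; simp [Matrix.fromBlocks]
    rwa [he] at h
  have hRsym : Rᵀ = R := by
    have := hRpsd.1
    rwa [Matrix.IsHermitian, conjTranspose_eq_transpose_of_trivial] at this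
  -- kernel inclusion
  have hker : ∀ x : m → ℝ, R *ᵥ x = 0 → Q *ᵥ x = 0 := by
    intro x hx
    set q : n → ℝ := Q *ᵥ x with hq
    have ha : 0 ≤ q ⬝ᵥ (P *ᵥ q) := by simpa using hPpsd.dotProduct_mulVec_nonneg q
    have hxq : x ⬝ᵥ (Qᵀ *ᵥ q) = q ⬝ᵥ q := by
      rw [Matrix.dotProduct_mulVec, vecMul_transpose, hq, dotProduct_comm]
    have key : ∀ t : ℝ, 0 ≤ t*t*(q ⬝ᵥ (P *ᵥ q)) + 2*t*(q ⬝ᵥ q) := by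
      intro t
      have h := hK.dotProduct_mulVec_nonneg (Sum.elim (t • q) x)
      have expand : (Sum.elim (t • q) x) ⬝ᵥ
          (Matrix.fromBlocks P Q Qᵀ R) *ᵥ (Sum.elim (t • q) x)
          = t*t*(q ⬝ᵥ (P *ᵥ q)) + 2*t*(q ⬝ᵥ q) := by
        simp only [Matrix.fromBlocks_mulVec, Sum.elim_comp_inl, Sum.elim_comp_inr,
          sumElim_dotProduct_sumElim, dotProduct_add, hx, add_zero,
          Matrix.mulVec_smul, dotProduct_smul, smul_dotProduct,
          smul_eq_mul, hxq, ← hq]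
        ring
      rw [star_trivial, expand] at h
      exact h
    have hs : q ⬝ᵥ q = 0 := quad_scalar_aux ha key
    exact (dotProduct_self_eq_zero).mp hs
  -- Q * (R * Rplus) = Q
  have hEsym : (1 - R * Rplus)ᵀ = 1 - R * Rplus := by
    rw [Matrix.transpose_sub, Matrix.transpose_one, hR.2.2.1]
  have hER : (1 - R * Rplus) * R = 0 := by
    rw [Matrix.sub_mul, Matrix.one_mul, Matrix.mul_assoc] at *
    rw [← Matrix.mul_assoc, hR.1, sub_self]
  have hRE : R * (1 - R * Rplus) = 0 := by
    have := congrArg Matrix.transpose hER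
    rwa [Matrix.transpose_mul, hEsym, hRsym, Matrix.transpose_zero] at this
  have hQE : Q * (1 - R * Rplus) = 0 := by
    ext i j
    have hcol : ∀ y : m → ℝ, (Q * (1 - R * Rplus)) *ᵥ y = 0 := by
      intro y
      rw [← Matrix.mulVec_mulVec]
      apply hker
      rw [Matrix.mulVec_mulVec, hRE, Matrix.zero_mulVec]
    have := congrFun (hcol (Pi.single j 1)) i
    simpa [Matrix.mulVec_single] using this
  have hQ : Q * (R * Rplus) = Q := by
    have h := hQE
    rw [Matrix.mul_sub, Matrix.mul_one, sub_eq_zero] at h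
    exact h.symm
  have hRRQ : R * Rplus * Qᵀ = Qᵀ := by
    calc R * Rplus * Qᵀ = (Q * (R * Rplus)ᵀ)ᵀ := by
          rw [Matrix.transpose_mul, Matrix.transpose_transpose]
      _ = (Q * (R * Rplus))ᵀ := by rw [hR.2.2.1]
      _ = Qᵀ := by rw [hQ]
  -- the completion-of-squares identity
  set w : m → ℝ := Rplus *ᵥ (Qᵀ *ᵥ u) with hw
  have hRw : R *ᵥ w = Qᵀ *ᵥ u := by
    rw [hw, Matrix.mulVec_mulVec, Matrix.mulVec_mulVec, hRRQ]
  have huQ : ∀ y : m → ℝ, u ⬝ᵥ (Q *ᵥ y) = (Qᵀ *ᵥ u) ⬝ᵥ y := by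
    intro y; rw [Matrix.dotProduct_mulVec, ← Matrix.mulVec_transpose]
  have hwR : ∀ y : m → ℝ, w ⬝ᵥ (R *ᵥ y) = (Qᵀ *ᵥ u) ⬝ᵥ y := by
    intro y
    rw [Matrix.dotProduct_mulVec, ← Matrix.mulVec_transpose, hRsym, hRw]
  have main : (Sum.elim u v) ⬝ᵥ (Matrix.fromBlocks P Q Qᵀ R).mulVec (Sum.elim u v)
      = u ⬝ᵥ (P - Q * Rplus * Qᵀ).mulVec u + (v + w) ⬝ᵥ (R *ᵥ (v + w)) := by
    have e1 : u ⬝ᵥ ((Q * Rplus * Qᵀ) *ᵥ u) = (Qᵀ *ᵥ u) ⬝ᵥ w := by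
      rw [Matrix.mul_assoc, ← Matrix.mulVec_mulVec, ← Matrix.mulVec_mulVec]
      exact huQ w
    have e2 : v ⬝ᵥ (R *ᵥ w) = (Qᵀ *ᵥ u) ⬝ᵥ v := by rw [hRw, dotProduct_comm]
    have e3 : w ⬝ᵥ (R *ᵥ w) = (Qᵀ *ᵥ u) ⬝ᵥ w := hwR w
    have e4 : w ⬝ᵥ (R *ᵥ v) = (Qᵀ *ᵥ u) ⬝ᵥ v := hwR v
    have e5 : v ⬝ᵥ (Qᵀ *ᵥ u) = (Qᵀ *ᵥ u) ⬝ᵥ v := dotProduct_comm _ _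
    simp only [Matrix.fromBlocks_mulVec, Sum.elim_comp_inl, Sum.elim_comp_inr,
      sumElim_dotProduct_sumElim, Matrix.sub_mulVec, dotProduct_sub,
      dotProduct_add, Matrix.mulVec_add, add_dotProduct,
      huQ v, e1, e2, e3, e4, e5]
    ring
  have hnn : 0 ≤ (v + w) ⬝ᵥ (R *ᵥ (v + w)) := by simpa using hRpsd.dotProduct_mulVec_nonneg (v + w)
  rw [main]
  linarith

theorem schur_quadform_lower_bound {a b : ℕ}
    (P : Matrix (Fin a) (Fin a) ℝ) (Q : Matrix (Fin a) (Fin b) ℝ)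
    (R : Matrix (Fin b) (Fin b) ℝ)
    (Pplus : Matrix (Fin a) (Fin a) ℝ) (Rplus : Matrix (Fin b) (Fin b) ℝ)
    (hK : (Matrix.fromBlocks P Q Qᵀ R).PosSemidef)
    (hP : IsMoorePenrose P Pplus) (hR : IsMoorePenrose R Rplus)
    (u : Fin a → ℝ) (v : Fin b → ℝ) :
    max (u ⬝ᵥ (P - Q * Rplus * Qᵀ).mulVec u) (v ⬝ᵥ (R - Qᵀ * Pplus * Q).mulVec v) ≤
      (Sum.elim u v) ⬝ᵥ (Matrix.fromBlocks P Q Qᵀ R).mulVec (Sum.elim u v) := by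
  apply max_le
  · exact schur_aux P Q R Rplus hK hR u v
  · -- swap the blocks
    have hK' : (Matrix.fromBlocks R Qᵀ Q P).PosSemidef := by
      have h := hK.submatrix (Sum.elim Sum.inr Sum.inl)
      have he : (Matrix.fromBlocks P Q Qᵀ R).submatrix (Sum.elim Sum.inr Sum.inl)
          (Sum.elim Sum.inr Sum.inl) = Matrix.fromBlocks R Qᵀ Q P := by
        ext i j
        cases i <;> cases j <;> simp [Matrix.fromBlocks]
      rwa [he] at h
    have hK'' : (Matrix.fromBlocks R Qᵀ Qᵀᵀ P).PosSemidef := by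
      rwa [Matrix.transpose_transpose]
    have h := schur_aux R Qᵀ P Pplus hK'' hP v u
    rw [Matrix.transpose_transpose] at h
    refine le_trans h (le_of_eq ?_)
    have e5 : v ⬝ᵥ (Qᵀ *ᵥ u) = u ⬝ᵥ (Q *ᵥ v) := by
      rw [Matrix.dotProduct_mulVec, vecMul_transpose, dotProduct_comm]
    simp only [Matrix.fromBlocks_mulVec, Sum.elim_comp_inl, Sum.elim_comp_inr,
      sumElim_dotProduct_sumElim, dotProduct_add, e5]
    ring
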